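/- Let S ⊆ ℝ^m, p ∈ S, U an open neighborhood of p, and suppose there is an affine subspace P ⊆ ℝ^m such that the orthogonal projection π onto P restricted to S ∩ U is bi-Lipschitz. Then for any open neighborhood V of p and any diffeomorphism Φ : V → Φ(V) ⊆ ℝ^m, there exist a neighborhood V' ⊆ V ∩ U of p and an affine subspace P' of the same dimension as P such that the orthogonal projection onto P' restricted to Φ(S ∩ V') is bi-Lipschitz. -/

import Mathlib

open Set Module

/-- A map is bi-Lipschitz on a set if it distorts distances by at most a fixed ratio. -/
def BiLipschitzOn {E : Type*} [MetricSpace E] (f : E → E) (s : Set E) : Prop :=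
  ∃ L > (0 : ℝ), ∀ x ∈ s, ∀ y ∈ s,
    L⁻¹ * dist x y ≤ dist (f x) (f y) ∧ dist (f x) (f y) ≤ L * dist x y

/-- Orthogonal projection onto the affine subspace `v + W`. -/
noncomputable def affProj {m : ℕ} (W : Submodule ℝ (EuclideanSpace ℝ (Fin m)))
    (v : EuclideanSpace ℝ (Fin m)) (x : EuclideanSpace ℝ (Fin m)) :
    EuclideanSpace ℝ (Fin m) :=
  v + ((W.orthogonalProjection (x - v) : W) : EuclideanSpace ℝ (Fin m))

/-- Invariance of graphical bi-Lipschitz structure under diffeomorphisms: if the orthogonal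
projection onto an affine subspace `v + W` is bi-Lipschitz on `S ∩ U`, then for any
diffeomorphism `Φ` of a neighborhood `V` of `p` there are a smaller neighborhood `V'` of `p`
and an affine subspace `v' + W'` of the same dimension whose orthogonal projection is
bi-Lipschitz on `Φ(S ∩ V')`. -/
lemma affProj_sub {m : ℕ} (W : Submodule ℝ (EuclideanSpace ℝ (Fin m)))
    (v x y : EuclideanSpace ℝ (Fin m)) :
    affProj W v x - affProj W v y
      = ((Submodule.orthogonalProjection W (x - y) : W) : EuclideanSpace ℝ (Fin m)) := by
  have h : (x - v) - (y - v) = x - y := by abel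
  rw [affProj, affProj, add_sub_add_left_eq_sub, ← Submodule.coe_sub, ← map_sub, h]

lemma cone_bound {m : ℕ} (T : EuclideanSpace ℝ (Fin m) →L[ℝ] EuclideanSpace ℝ (Fin m))
    (hT : Function.Injective T) (W : Submodule ℝ (EuclideanSpace ℝ (Fin m))) {L : ℝ} (hL : 0 < L) :
    ∃ c > (0:ℝ), ∀ u : EuclideanSpace ℝ (Fin m),
      L⁻¹ * ‖u‖ ≤ ‖((Submodule.orthogonalProjection W u : W) : EuclideanSpace ℝ (Fin m))‖ →
      c * ‖u‖ ≤ ‖((Submodule.orthogonalProjection ((Submodule.map (T : EuclideanSpace ℝ (Fin m) →ₗ[ℝ] EuclideanSpace ℝ (Fin m)) Wᗮ)ᗮ) (T u) : _) : EuclideanSpace ℝ (Fin m))‖ := by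
  set W' := (Submodule.map (T : EuclideanSpace ℝ (Fin m) →ₗ[ℝ] EuclideanSpace ℝ (Fin m)) Wᗮ)ᗮ with hW'
  set f : EuclideanSpace ℝ (Fin m) → ℝ :=
    fun u => ‖((Submodule.orthogonalProjection W' (T u) : W') : EuclideanSpace ℝ (Fin m))‖ with hf
  have hfc : Continuous f :=
    continuous_norm.comp (continuous_subtype_val.comp
      ((Submodule.orthogonalProjection W').continuous.comp T.continuous))
  have hfpos : ∀ u : EuclideanSpace ℝ (Fin m), ‖u‖ = 1 →
      L⁻¹ ≤ ‖((Submodule.orthogonalProjection W u : W) : EuclideanSpace ℝ (Fin m))‖ → 0 < f u := by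
    intro u hu1 hu2
    have hne : ((Submodule.orthogonalProjection W' (T u) : W') : EuclideanSpace ℝ (Fin m)) ≠ 0 := by
      intro hzero
      have hTu : T u ∈ W'ᗮ := by
        rw [← Submodule.orthogonalProjectionOnto_eq_zero_iff]
        exact_mod_cast hzero
      rw [hW', Submodule.orthogonal_orthogonal] at hTu
      obtain ⟨w, hwmem, hweq⟩ := hTu
      have huw : u = w := hT (by simpa using hweq.symm)
      subst huw
      have h0 : ((Submodule.orthogonalProjection W u : W) : EuclideanSpace ℝ (Fin m)) = 0 := by
        exact_mod_cast Submodule.orthogonalProjectionOnto_apply_of_mem_orthogonal hwmem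
      rw [h0, norm_zero] at hu2
      have : (0:ℝ) < L⁻¹ := by positivity
      linarith
    simpa [hf] using norm_pos_iff.mpr hne
  -- homogeneity facts
  have hscale : ∀ (u : EuclideanSpace ℝ (Fin m)) (hu : u ≠ 0),
      ‖(‖u‖⁻¹ • u : EuclideanSpace ℝ (Fin m))‖ = 1 := by
    intro u hu
    rw [norm_smul, norm_inv, norm_norm, inv_mul_cancel₀ (norm_ne_zero_iff.mpr hu)]
  set K : Set (EuclideanSpace ℝ (Fin m)) :=
    {u | ‖u‖ = 1 ∧ L⁻¹ ≤ ‖((Submodule.orthogonalProjection W u : W) : EuclideanSpace ℝ (Fin m))‖} with hK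
  have hKclosed : IsClosed K := by
    apply IsClosed.inter
    · exact isClosed_eq continuous_norm continuous_const
    · exact isClosed_le continuous_const (continuous_norm.comp
        (continuous_subtype_val.comp (Submodule.orthogonalProjection W).continuous))
  have hKcompact : IsCompact K := by
    apply (isCompact_sphere (0 : EuclideanSpace ℝ (Fin m)) 1).of_isClosed_subset hKclosed
    intro u hu
    simpa [mem_sphere_iff_norm] using hu.1
  by_cases hKne : K.Nonempty
  · obtain ⟨u₀, hu₀K, hu₀min⟩ := hKcompact.exists_isMinOn hKne hfc.continuousOn
    refine ⟨f u₀, hfpos u₀ hu₀K.1 hu₀K.2, ?_⟩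
    intro u hu
    rcases eq_or_ne u 0 with rfl | hune
    · simp
    · have h1 : ‖u‖⁻¹ • u ∈ K := by
        refine ⟨hscale u hune, ?_⟩
        have : ((Submodule.orthogonalProjection W (‖u‖⁻¹ • u) : W) : EuclideanSpace ℝ (Fin m))
            = ‖u‖⁻¹ • ((Submodule.orthogonalProjection W u : W) : EuclideanSpace ℝ (Fin m)) := by
          rw [map_smul]; simp
        rw [this, norm_smul, norm_inv, norm_norm]
        calc L⁻¹ = ‖u‖⁻¹ * (L⁻¹ * ‖u‖) := by
                rw [mul_comm L⁻¹, ← mul_assoc, inv_mul_cancel₀ (norm_ne_zero_iff.mpr hune), one_mul]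
          _ ≤ ‖u‖⁻¹ * ‖((Submodule.orthogonalProjection W u : W) : EuclideanSpace ℝ (Fin m))‖ :=
                mul_le_mul_of_nonneg_left hu (by positivity)
      have h2 : f (‖u‖⁻¹ • u) = ‖u‖⁻¹ * f u := by
        simp only [hf, map_smul]
        rw [show ((‖u‖⁻¹ • Submodule.orthogonalProjection W' (T u) : W') : EuclideanSpace ℝ (Fin m))
            = ‖u‖⁻¹ • ((Submodule.orthogonalProjection W' (T u) : W') : EuclideanSpace ℝ (Fin m)) by simp,
          norm_smul, norm_inv, norm_norm]
      have h3 : f u₀ ≤ f (‖u‖⁻¹ • u) := hu₀min h1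
      rw [h2] at h3
      have h4 : f u₀ * ‖u‖ ≤ (‖u‖⁻¹ * f u) * ‖u‖ :=
        mul_le_mul_of_nonneg_right h3 (norm_nonneg u)
      calc f u₀ * ‖u‖ ≤ (‖u‖⁻¹ * f u) * ‖u‖ := h4
        _ = f u * (‖u‖⁻¹ * ‖u‖) := by ring
        _ = f u := by rw [inv_mul_cancel₀ (norm_ne_zero_iff.mpr hune), mul_one]
  · refine ⟨1, one_pos, ?_⟩
    intro u hu
    rcases eq_or_ne u 0 with rfl | hune
    · simp
    · exfalso
      apply hKne
      refine ⟨‖u‖⁻¹ • u, hscale u hune, ?_⟩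
      have : ((Submodule.orthogonalProjection W (‖u‖⁻¹ • u) : W) : EuclideanSpace ℝ (Fin m))
          = ‖u‖⁻¹ • ((Submodule.orthogonalProjection W u : W) : EuclideanSpace ℝ (Fin m)) := by
        rw [map_smul]; simp
      rw [this, norm_smul, norm_inv, norm_norm]
      calc L⁻¹ = ‖u‖⁻¹ * (L⁻¹ * ‖u‖) := by
            rw [mul_comm L⁻¹, ← mul_assoc, inv_mul_cancel₀ (norm_ne_zero_iff.mpr hune), one_mul]
        _ ≤ ‖u‖⁻¹ * ‖((Submodule.orthogonalProjection W u : W) : EuclideanSpace ℝ (Fin m))‖ :=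
            mul_le_mul_of_nonneg_left hu (by positivity)

lemma finrank_orthog_map {m : ℕ} (T : EuclideanSpace ℝ (Fin m) →L[ℝ] EuclideanSpace ℝ (Fin m))
    (hT : Function.Injective T) (W : Submodule ℝ (EuclideanSpace ℝ (Fin m))) :
    finrank ℝ ((Submodule.map (T : EuclideanSpace ℝ (Fin m) →ₗ[ℝ] EuclideanSpace ℝ (Fin m)) Wᗮ)ᗮ)
      = finrank ℝ W := by
  have h1 := Submodule.finrank_add_finrank_orthogonal
    (Submodule.map (T : EuclideanSpace ℝ (Fin m) →ₗ[ℝ] EuclideanSpace ℝ (Fin m)) Wᗮ)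
  have h2 := Submodule.finrank_add_finrank_orthogonal W
  have h3 : finrank ℝ (Submodule.map (T : EuclideanSpace ℝ (Fin m) →ₗ[ℝ] EuclideanSpace ℝ (Fin m)) Wᗮ)
      = finrank ℝ Wᗮ :=
    (LinearEquiv.finrank_eq (Submodule.equivMapOfInjective _ hT _)).symm
  omega

lemma proj_coe_norm_le {m : ℕ} (W : Submodule ℝ (EuclideanSpace ℝ (Fin m)))
    (z : EuclideanSpace ℝ (Fin m)) :
    ‖((Submodule.orthogonalProjection W z : W) : EuclideanSpace ℝ (Fin m))‖ ≤ ‖z‖ := by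
  calc ‖((Submodule.orthogonalProjection W z : W) : EuclideanSpace ℝ (Fin m))‖
      = ‖Submodule.orthogonalProjection W z‖ := rfl
    _ ≤ ‖Submodule.orthogonalProjection W‖ * ‖z‖ := (Submodule.orthogonalProjection W).le_opNorm z
    _ ≤ 1 * ‖z‖ := mul_le_mul_of_nonneg_right (Submodule.orthogonalProjectionOnto_norm_le _) (norm_nonneg z)
    _ = ‖z‖ := one_mul _


theorem stmt_16 {m : ℕ} (S : Set (EuclideanSpace ℝ (Fin m)))
    (p : EuclideanSpace ℝ (Fin m)) (hpS : p ∈ S)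
    (U : Set (EuclideanSpace ℝ (Fin m))) (hU : IsOpen U) (hpU : p ∈ U)
    (W : Submodule ℝ (EuclideanSpace ℝ (Fin m))) (v : EuclideanSpace ℝ (Fin m))
    (hbil : BiLipschitzOn (affProj W v) (S ∩ U))
    (V : Set (EuclideanSpace ℝ (Fin m))) (hV : IsOpen V) (hpV : p ∈ V)
    (Φ Ψ : EuclideanSpace ℝ (Fin m) → EuclideanSpace ℝ (Fin m))
    (hΦ : ContDiffOn ℝ 1 Φ V) (hΦV : IsOpen (Φ '' V))
    (hΨ : ContDiffOn ℝ 1 Ψ (Φ '' V)) (hinv : ∀ x ∈ V, Ψ (Φ x) = x) :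
    ∃ V' : Set (EuclideanSpace ℝ (Fin m)), IsOpen V' ∧ p ∈ V' ∧ V' ⊆ V ∩ U ∧
      ∃ (W' : Submodule ℝ (EuclideanSpace ℝ (Fin m))) (v' : EuclideanSpace ℝ (Fin m)),
        Module.finrank ℝ W' = Module.finrank ℝ W ∧
        BiLipschitzOn (affProj W' v') (Φ '' (S ∩ V')) := by
  obtain ⟨L, hL, hbilH⟩ := hbil
  have hΦdiff : ∀ x ∈ V, DifferentiableAt ℝ Φ x := fun x hx =>
    (hΦ.contDiffAt (hV.mem_nhds hx)).differentiableAt one_ne_zero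
  set T := fderiv ℝ Φ p with hT
  -- T is injective
  have hΦpV : Φ p ∈ Φ '' V := ⟨p, hpV, rfl⟩
  have hΨdiff : DifferentiableAt ℝ Ψ (Φ p) :=
    (hΨ.contDiffAt (hΦV.mem_nhds hΦpV)).differentiableAt one_ne_zero
  have hcomp : fderiv ℝ (Ψ ∘ Φ) p = (fderiv ℝ Ψ (Φ p)).comp T :=
    fderiv_comp (x := p) hΨdiff (hΦdiff p hpV)
  have hid : fderiv ℝ (Ψ ∘ Φ) p = ContinuousLinearMap.id ℝ (EuclideanSpace ℝ (Fin m)) := by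
    have heq : (Ψ ∘ Φ) =ᶠ[nhds p] id := by
      filter_upwards [hV.mem_nhds hpV] with x hx using hinv x hx
    rw [heq.fderiv_eq, fderiv_id]
  have hleft : ∀ u, fderiv ℝ Ψ (Φ p) (T u) = u := by
    intro u
    have h := congrArg (fun (A : EuclideanSpace ℝ (Fin m) →L[ℝ] EuclideanSpace ℝ (Fin m)) => A u)
      (hcomp.symm.trans hid)
    simpa using h
  have hTinj : Function.Injective T := Function.LeftInverse.injective hleft
  obtain ⟨c, hc, hcone⟩ := cone_bound T hTinj W hL
  -- continuity of the derivative near p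
  have hgc : ContinuousAt (fun x => fderiv ℝ Φ x) p := by
    have h1 : ContinuousOn (fderivWithin ℝ Φ V) V :=
      hΦ.continuousOn_fderivWithin hV.uniqueDiffOn le_rfl
    have h2 : ContinuousOn (fun x => fderiv ℝ Φ x) V :=
      h1.congr fun x hx => (fderivWithin_of_isOpen hV hx).symm
    exact h2.continuousAt (hV.mem_nhds hpV)
  have hcontn : ContinuousAt (fun x => ‖fderiv ℝ Φ x - T‖) p :=
    (hgc.sub continuousAt_const).norm
  have hval : ‖fderiv ℝ Φ p - T‖ < c/2 := by
    rw [hT, sub_self, norm_zero]; positivity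
  have hnhd : ∀ᶠ x in nhds p, ‖fderiv ℝ Φ x - T‖ < c/2 :=
    hcontn (Iio_mem_nhds hval)
  obtain ⟨r, hr, hball⟩ := Metric.mem_nhds_iff.mp
    (Filter.inter_mem (Filter.inter_mem (hV.mem_nhds hpV) (hU.mem_nhds hpU)) hnhd)
  set V' := Metric.ball p r with hV'
  have hV'sub : V' ⊆ V ∩ U := fun x hx => (hball hx).1
  have hV'V : V' ⊆ V := fun x hx => (hball hx).1.1
  have hV'bound : ∀ x ∈ V', ‖fderiv ℝ Φ x - T‖ ≤ c/2 := fun x hx => (hball hx).2.le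
  -- mean value estimate
  have hmv : ∀ q₁ ∈ V', ∀ q₂ ∈ V',
      ‖(Φ q₁ - Φ q₂) - T (q₁ - q₂)‖ ≤ c/2 * ‖q₁ - q₂‖ := by
    intro q₁ hq₁ q₂ hq₂
    have key := (convex_ball p r).norm_image_sub_le_of_norm_hasFDerivWithin_le
      (f := fun x => Φ x - T x) (f' := fun x => fderiv ℝ Φ x - T) (C := c/2)
      (fun x hx => (((hΦdiff x (hV'V hx)).hasFDerivAt).sub (T.hasFDerivAt)).hasFDerivWithinAt)
      (fun x hx => hV'bound x hx) hq₂ hq₁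
    have harr : (Φ q₁ - T q₁) - (Φ q₂ - T q₂) = (Φ q₁ - Φ q₂) - T (q₁ - q₂) := by
      rw [map_sub]; abel
    rw [harr] at key
    exact key
  -- Lipschitz-type upper bound for Φ on V'
  set Kc : ℝ := ‖T‖ + c/2 with hKc
  have hKcpos : 0 < Kc := by positivity
  have hupper : ∀ q₁ ∈ V', ∀ q₂ ∈ V', ‖Φ q₁ - Φ q₂‖ ≤ Kc * ‖q₁ - q₂‖ := by
    intro q₁ hq₁ q₂ hq₂
    calc ‖Φ q₁ - Φ q₂‖ = ‖T (q₁ - q₂) + ((Φ q₁ - Φ q₂) - T (q₁ - q₂))‖ := by abel_nf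
      _ ≤ ‖T (q₁ - q₂)‖ + ‖(Φ q₁ - Φ q₂) - T (q₁ - q₂)‖ := norm_add_le _ _
      _ ≤ ‖T‖ * ‖q₁ - q₂‖ + c/2 * ‖q₁ - q₂‖ :=
          add_le_add (T.le_opNorm _) (hmv q₁ hq₁ q₂ hq₂)
      _ = Kc * ‖q₁ - q₂‖ := by ring
  refine ⟨V', Metric.isOpen_ball, Metric.mem_ball_self hr, hV'sub,
    (Submodule.map (T : EuclideanSpace ℝ (Fin m) →ₗ[ℝ] EuclideanSpace ℝ (Fin m)) Wᗮ)ᗮ, 0,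
    finrank_orthog_map T hTinj W, ?_⟩
  set W' := (Submodule.map (T : EuclideanSpace ℝ (Fin m) →ₗ[ℝ] EuclideanSpace ℝ (Fin m)) Wᗮ)ᗮ
  refine ⟨max 1 (2 * Kc / c), lt_of_lt_of_le one_pos (le_max_left _ _), ?_⟩
  rintro x ⟨q₁, hq₁, rfl⟩ y ⟨q₂, hq₂, rfl⟩
  have hq₁' : q₁ ∈ S ∩ U := ⟨hq₁.1, (hV'sub hq₁.2).2⟩
  have hq₂' : q₂ ∈ S ∩ U := ⟨hq₂.1, (hV'sub hq₂.2).2⟩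
  -- the difference is in the cone
  have hconeu : L⁻¹ * ‖q₁ - q₂‖
      ≤ ‖((Submodule.orthogonalProjection W (q₁ - q₂) : W) : EuclideanSpace ℝ (Fin m))‖ := by
    have h := (hbilH q₁ hq₁' q₂ hq₂').1
    rwa [dist_eq_norm, dist_eq_norm, affProj_sub] at h
  have hlow := hcone (q₁ - q₂) hconeu
  -- lower estimate on projected image distance
  have hkey : c/2 * ‖q₁ - q₂‖
      ≤ ‖((Submodule.orthogonalProjection W' (Φ q₁ - Φ q₂) : W') : EuclideanSpace ℝ (Fin m))‖ := by
    have herr : ‖((Submodule.orthogonalProjection W' ((Φ q₁ - Φ q₂) - T (q₁ - q₂)) : W') : EuclideanSpace ℝ (Fin m))‖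
        ≤ c/2 * ‖q₁ - q₂‖ :=
      le_trans (proj_coe_norm_le _ _) (hmv q₁ hq₁.2 q₂ hq₂.2)
    have hsplit : ((Submodule.orthogonalProjection W' (T (q₁ - q₂)) : W') : EuclideanSpace ℝ (Fin m))
        = ((Submodule.orthogonalProjection W' (Φ q₁ - Φ q₂) : W') : EuclideanSpace ℝ (Fin m))
          - ((Submodule.orthogonalProjection W' ((Φ q₁ - Φ q₂) - T (q₁ - q₂)) : W') : EuclideanSpace ℝ (Fin m)) := by
      rw [← Submodule.coe_sub, ← map_sub]
      congr 2
      abel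
    have htri : ‖((Submodule.orthogonalProjection W' (T (q₁ - q₂)) : W') : EuclideanSpace ℝ (Fin m))‖
        ≤ ‖((Submodule.orthogonalProjection W' (Φ q₁ - Φ q₂) : W') : EuclideanSpace ℝ (Fin m))‖
          + ‖((Submodule.orthogonalProjection W' ((Φ q₁ - Φ q₂) - T (q₁ - q₂)) : W') : EuclideanSpace ℝ (Fin m))‖ := by
      rw [hsplit]; exact norm_sub_le _ _
    have hc2 : c * ‖q₁ - q₂‖ = c/2 * ‖q₁ - q₂‖ + c/2 * ‖q₁ - q₂‖ := by ring
    linarith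
  -- conclude
  have hdistp : dist (affProj W' 0 (Φ q₁)) (affProj W' 0 (Φ q₂))
      = ‖((Submodule.orthogonalProjection W' (Φ q₁ - Φ q₂) : W') : EuclideanSpace ℝ (Fin m))‖ := by
    rw [dist_eq_norm, affProj_sub]
  have hdist : dist (Φ q₁) (Φ q₂) = ‖Φ q₁ - Φ q₂‖ := dist_eq_norm _ _
  constructor
  · -- lower bound
    rw [hdistp, hdist]
    have hL'inv : (max 1 (2 * Kc / c))⁻¹ ≤ (2 * Kc / c)⁻¹ :=
      inv_anti₀ (by positivity) (le_max_right _ _)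
    calc (max 1 (2 * Kc / c))⁻¹ * ‖Φ q₁ - Φ q₂‖
        ≤ (2 * Kc / c)⁻¹ * ‖Φ q₁ - Φ q₂‖ :=
          mul_le_mul_of_nonneg_right hL'inv (norm_nonneg _)
      _ ≤ (2 * Kc / c)⁻¹ * (Kc * ‖q₁ - q₂‖) :=
          mul_le_mul_of_nonneg_left (hupper q₁ hq₁.2 q₂ hq₂.2) (by positivity)
      _ = c/2 * ‖q₁ - q₂‖ := by
          field_simp
      _ ≤ _ := hkey
  · -- upper bound
    rw [hdistp, hdist]
    calc ‖((Submodule.orthogonalProjection W' (Φ q₁ - Φ q₂) : W') : EuclideanSpace ℝ (Fin m))‖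
        ≤ ‖Φ q₁ - Φ q₂‖ := proj_coe_norm_le _ _
      _ ≤ max 1 (2 * Kc / c) * ‖Φ q₁ - Φ q₂‖ :=
          le_mul_of_one_le_left (norm_nonneg _) (le_max_left _ _)
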